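/- arXiv:2503.08021 — 3 statements merged into one kernel-verified Lean document; each statement's English description precedes it below -/
import Mathlib

section
/- Let A and H be cocommutative Hopf algebras over a field k such that A is an H-bimodule Hopf algebra, let B be a Rota-Baxter operator on H, and let R : A → A be a linear map satisfying R(g₁B(g₂) ▷ b ◁ S_H(B(g₃))) = R(b) ◁ S_H(B(g)) for all b ∈ A and g ∈ H. Then for all a ∈ A and g ∈ H: (i) R(g₁B(g₂) ▷ a) ◁ B(g₃) = R(a ◁ B(g)), and (ii) R(a) ◁ B(g) = R(S_H(g₁B(g₂)) ▷ a ◁ B(g₃)). -/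
open TensorProduct

noncomputable section

variable {k : Type} [Field k]

/-- The iterated comultiplication `x ↦ x₁ ⊗ (x₂ ⊗ x₃)` associated to a comultiplication `Δ`. -/
def comul3 {V : Type} [AddCommMonoid V] [Module k V] (Δ : V →ₗ[k] V ⊗[k] V) :
    V →ₗ[k] V ⊗[k] (V ⊗[k] V) :=
  LinearMap.lTensor V Δ ∘ₗ Δ

/-- `B` is a Rota–Baxter operator on a (cocommutative) Hopf-algebra-like structure with
comultiplication `Δ`, counit `ε`, multiplication `mul` and antipode `S`:  `B` is a coalgebra
map and `B(x)B(y) = B(x₁ B(x₂) y S(B(x₃)))` for all `x, y`.  The Sweedler expression is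
stated via an arbitrary finite representation of the iterated comultiplication of `x`. -/
def IsRotaBaxterOp {V : Type} [AddCommMonoid V] [Module k V]
    (Δ : V →ₗ[k] V ⊗[k] V) (ε : V →ₗ[k] k)
    (mul : V →ₗ[k] V →ₗ[k] V) (S : V →ₗ[k] V) (B : V →ₗ[k] V) : Prop :=
  Δ ∘ₗ B = TensorProduct.map B B ∘ₗ Δ ∧
  ε ∘ₗ B = ε ∧
  ∀ (x y : V) (ι : Type) (s : Finset ι) (x1 x2 x3 : ι → V),
    comul3 Δ x = ∑ i ∈ s, x1 i ⊗ₜ[k] (x2 i ⊗ₜ[k] x3 i) →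
    mul (B x) (B y) = B (∑ i ∈ s, mul (mul (mul (x1 i) (B (x2 i))) y) (S (x3 i)))

/-- The data of an `H`-bimodule Hopf algebra structure on `A`, relative to prescribed
comultiplications `ΔA, ΔH`, counits `εA, εH` and antipode `SA`:  bilinear left and right
actions making `A` an `H`-bimodule algebra, an `H`-bimodule coalgebra, and whose antipode
is `H`-bilinear. -/
structure BimoduleHopfData (k : Type) [Field k] (A H : Type) [Ring A] [Ring H]
    [Algebra k A] [Algebra k H]
    (ΔA : A →ₗ[k] A ⊗[k] A) (εA : A →ₗ[k] k) (SA : A →ₗ[k] A)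
    (ΔH : H →ₗ[k] H ⊗[k] H) (εH : H →ₗ[k] k) where
  lact : H →ₗ[k] A →ₗ[k] A
  ract : A →ₗ[k] H →ₗ[k] A
  one_lact : ∀ a : A, lact 1 a = a
  mul_lact : ∀ (g h : H) (a : A), lact (g * h) a = lact g (lact h a)
  ract_one : ∀ a : A, ract a 1 = a
  ract_mul : ∀ (a : A) (g h : H), ract a (g * h) = ract (ract a g) h
  lact_ract : ∀ (g : H) (a : A) (h : H), lact g (ract a h) = ract (lact g a) h
  lact_mulA : ∀ (h : H) (a b : A) (ι : Type) (s : Finset ι) (h1 h2 : ι → H),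
    ΔH h = ∑ i ∈ s, h1 i ⊗ₜ[k] h2 i →
    lact h (a * b) = ∑ i ∈ s, lact (h1 i) a * lact (h2 i) b
  lact_oneA : ∀ h : H, lact h (1 : A) = εH h • (1 : A)
  mulA_ract : ∀ (a b : A) (h : H) (ι : Type) (s : Finset ι) (h1 h2 : ι → H),
    ΔH h = ∑ i ∈ s, h1 i ⊗ₜ[k] h2 i →
    ract (a * b) h = ∑ i ∈ s, ract a (h1 i) * ract b (h2 i)
  oneA_ract : ∀ h : H, ract (1 : A) h = εH h • (1 : A)
  comul_lact : ∀ (h : H) (a : A) (ι κ : Type) (s : Finset ι) (t : Finset κ)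
      (h1 h2 : ι → H) (a1 a2 : κ → A),
    ΔH h = ∑ i ∈ s, h1 i ⊗ₜ[k] h2 i →
    ΔA a = ∑ j ∈ t, a1 j ⊗ₜ[k] a2 j →
    ΔA (lact h a) = ∑ i ∈ s, ∑ j ∈ t, lact (h1 i) (a1 j) ⊗ₜ[k] lact (h2 i) (a2 j)
  comul_ract : ∀ (a : A) (h : H) (ι κ : Type) (s : Finset ι) (t : Finset κ)
      (a1 a2 : ι → A) (h1 h2 : κ → H),
    ΔA a = ∑ i ∈ s, a1 i ⊗ₜ[k] a2 i →
    ΔH h = ∑ j ∈ t, h1 j ⊗ₜ[k] h2 j →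
    ΔA (ract a h) = ∑ i ∈ s, ∑ j ∈ t, ract (a1 i) (h1 j) ⊗ₜ[k] ract (a2 i) (h2 j)
  counit_lact : ∀ (h : H) (a : A), εA (lact h a) = εH h * εA a
  counit_ract : ∀ (a : A) (h : H), εA (ract a h) = εA a * εH h
  antipode_lact : ∀ (h : H) (a : A), lact h (SA a) = SA (lact h a)
  antipode_ract : ∀ (a : A) (h : H), ract (SA a) h = SA (ract a h)

variable {A H : Type} [Ring A] [Ring H] [Algebra k A] [Algebra k H]
  {ΔA : A →ₗ[k] A ⊗[k] A} {εA : A →ₗ[k] k} {SA : A →ₗ[k] A}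
  {ΔH : H →ₗ[k] H ⊗[k] H} {εH : H →ₗ[k] k}

/-- `m` is the multiplication of the L-R smash product `A ⋈ H`:
`(a ⋈ h)(b ⋈ g) = (a ◁ g₂)(h₁ ▷ b) ⋈ h₂g₁`. -/
def IsSmashMul (D : BimoduleHopfData k A H ΔA εA SA ΔH εH)
    (m : (A ⊗[k] H) →ₗ[k] (A ⊗[k] H) →ₗ[k] A ⊗[k] H) : Prop :=
  ∀ (a b : A) (h g : H) (ι κ : Type) (s : Finset ι) (t : Finset κ)
    (h1 h2 : ι → H) (g1 g2 : κ → H),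
    ΔH h = ∑ i ∈ s, h1 i ⊗ₜ[k] h2 i →
    ΔH g = ∑ j ∈ t, g1 j ⊗ₜ[k] g2 j →
    m (a ⊗ₜ[k] h) (b ⊗ₜ[k] g) =
      ∑ i ∈ s, ∑ j ∈ t, (D.ract a (g2 j) * D.lact (h1 i) b) ⊗ₜ[k] (h2 i * g1 j)

/-- `v` is the antipode of the L-R smash product `A ⋈ H`:
`S(a ⋈ h) = S_H(h₃) ▷ S_A(a) ◁ S_H(h₂) ⋈ S_H(h₁)`. -/
def IsSmashAntipode (D : BimoduleHopfData k A H ΔA εA SA ΔH εH) (SH : H →ₗ[k] H)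
    (v : A ⊗[k] H →ₗ[k] A ⊗[k] H) : Prop :=
  ∀ (a : A) (h : H) (ι : Type) (s : Finset ι) (h1 h2 h3 : ι → H),
    comul3 ΔH h = ∑ i ∈ s, h1 i ⊗ₜ[k] (h2 i ⊗ₜ[k] h3 i) →
    v (a ⊗ₜ[k] h) =
      ∑ i ∈ s, D.ract (D.lact (SH (h3 i)) (SA a)) (SH (h2 i)) ⊗ₜ[k] SH (h1 i)

/-- `Bb` is the map `B̄(a ⋈ h) = B(h₁) ▷ R(a) ◁ B(h₂) ⋈ B(h₃)` on `A ⋈ H`. -/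
def IsBbar (D : BimoduleHopfData k A H ΔA εA SA ΔH εH) (R : A →ₗ[k] A) (B : H →ₗ[k] H)
    (Bb : A ⊗[k] H →ₗ[k] A ⊗[k] H) : Prop :=
  ∀ (a : A) (h : H) (ι : Type) (s : Finset ι) (h1 h2 h3 : ι → H),
    comul3 ΔH h = ∑ i ∈ s, h1 i ⊗ₜ[k] (h2 i ⊗ₜ[k] h3 i) →
    Bb (a ⊗ₜ[k] h) =
      ∑ i ∈ s, D.ract (D.lact (B (h1 i)) (R a)) (B (h2 i)) ⊗ₜ[k] B (h3 i)

/-- The comultiplication of the L-R smash product: `Δ(a ⋈ h) = (a₁ ⋈ h₁) ⊗ (a₂ ⋈ h₂)`. -/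
def smashComul (ΔA : A →ₗ[k] A ⊗[k] A) (ΔH : H →ₗ[k] H ⊗[k] H) :
    A ⊗[k] H →ₗ[k] (A ⊗[k] H) ⊗[k] (A ⊗[k] H) :=
  (TensorProduct.tensorTensorTensorComm k A A H H).toLinearMap ∘ₗ TensorProduct.map ΔA ΔH

/-- The counit of the L-R smash product: `ε(a ⋈ h) = ε(a)ε(h)`. -/
def smashCounit (εA : A →ₗ[k] k) (εH : H →ₗ[k] k) : A ⊗[k] H →ₗ[k] k :=
  (TensorProduct.lid k k).toLinearMap ∘ₗ TensorProduct.map εA εH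


namespace RBaux

open LinearMap

theorem exists_repr3 {M N P : Type} [AddCommMonoid M] [AddCommMonoid N] [AddCommMonoid P]
    [Module k M] [Module k N] [Module k P] (t : M ⊗[k] (N ⊗[k] P)) :
    ∃ (ι : Type) (s : Finset ι) (x1 : ι → M) (x2 : ι → N) (x3 : ι → P),
      t = ∑ i ∈ s, x1 i ⊗ₜ[k] (x2 i ⊗ₜ[k] x3 i) := by
  obtain ⟨S, hS⟩ := TensorProduct.exists_finset t
  choose F hF using fun (u : N ⊗[k] P) => TensorProduct.exists_finset (R := k) u
  refine ⟨(_ : M × (N ⊗[k] P)) × (N × P), S.sigma (fun p => F p.2),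
    fun q => q.1.1, fun q => q.2.1, fun q => q.2.2, ?_⟩
  rw [Finset.sum_sigma, hS]
  refine Finset.sum_congr rfl fun p _ => ?_
  conv_lhs => rw [hF p.2]
  exact TensorProduct.tmul_sum _ _ _


variable {H : Type} [Ring H] [HopfAlgebra k H]
variable {E : Type} [Ring E] [Algebra k E]

/-- Convolution product on `Hom(H, E)`. -/
def conv (f g : H →ₗ[k] E) : H →ₗ[k] E :=
  mul' k E ∘ₗ TensorProduct.map f g ∘ₗ Coalgebra.comul

/-- Convolution unit. -/
def cunit : H →ₗ[k] E := Algebra.linearMap k E ∘ₗ Coalgebra.counit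

lemma conv_apply_repr (f g : H →ₗ[k] E) {h : H} {ι : Type} {s : Finset ι} {x y : ι → H}
    (hrep : Coalgebra.comul (R := k) h = ∑ i ∈ s, x i ⊗ₜ[k] y i) :
    conv f g h = ∑ i ∈ s, f (x i) * g (y i) := by
  simp [conv, hrep]

lemma conv_comp_right (f : H →ₗ[k] E) (Y : H ⊗[k] H →ₗ[k] E) :
    conv f (Y ∘ₗ Coalgebra.comul) =
      mul' k E ∘ₗ TensorProduct.map f Y ∘ₗ comul3 Coalgebra.comul := by
  have h1 : TensorProduct.map f (Y ∘ₗ Coalgebra.comul) =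
      TensorProduct.map f Y ∘ₗ lTensor H (Coalgebra.comul (R := k)) := by
    apply TensorProduct.ext'; intro x y; simp
  rw [conv, h1]; rfl

lemma conv_comp_left (f : H →ₗ[k] E) (Y : H ⊗[k] H →ₗ[k] E) :
    conv (Y ∘ₗ Coalgebra.comul) f =
      mul' k E ∘ₗ TensorProduct.map Y f ∘ₗ
        (TensorProduct.assoc k H H H).symm.toLinearMap ∘ₗ comul3 Coalgebra.comul := by
  have h1 : TensorProduct.map (Y ∘ₗ Coalgebra.comul) f =
      TensorProduct.map Y f ∘ₗ rTensor H (Coalgebra.comul (R := k)) := by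
    apply TensorProduct.ext'; intro x y; simp
  have h2 : rTensor H (Coalgebra.comul (R := k)) ∘ₗ Coalgebra.comul =
      (TensorProduct.assoc k H H H).symm.toLinearMap ∘ₗ comul3 Coalgebra.comul :=
    Coalgebra.coassoc_symm.symm
  rw [conv, h1, LinearMap.comp_assoc, h2]

lemma conv_comp_right_repr (f : H →ₗ[k] E) (Y : H ⊗[k] H →ₗ[k] E) {g : H} {ι : Type}
    {s : Finset ι} {x1 x2 x3 : ι → H}
    (hrep : comul3 (Coalgebra.comul (R := k) (A := H)) g =
      ∑ i ∈ s, x1 i ⊗ₜ[k] (x2 i ⊗ₜ[k] x3 i)) :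
    conv f (Y ∘ₗ Coalgebra.comul) g = ∑ i ∈ s, f (x1 i) * Y (x2 i ⊗ₜ[k] x3 i) := by
  have := LinearMap.congr_fun (conv_comp_right f Y) g
  simp only [LinearMap.comp_apply] at this
  rw [this, hrep, map_sum]
  simp

lemma conv_comp_left_repr (f : H →ₗ[k] E) (Y : H ⊗[k] H →ₗ[k] E) {g : H} {ι : Type}
    {s : Finset ι} {x1 x2 x3 : ι → H}
    (hrep : comul3 (Coalgebra.comul (R := k) (A := H)) g =
      ∑ i ∈ s, x1 i ⊗ₜ[k] (x2 i ⊗ₜ[k] x3 i)) :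
    conv (Y ∘ₗ Coalgebra.comul) f g = ∑ i ∈ s, Y (x1 i ⊗ₜ[k] x2 i) * f (x3 i) := by
  have := LinearMap.congr_fun (conv_comp_left f Y) g
  simp only [LinearMap.comp_apply] at this
  rw [this, hrep]
  simp [TensorProduct.assoc_symm_tmul]

lemma conv_assoc (f g h : H →ₗ[k] E) : conv (conv f g) h = conv f (conv g h) := by
  have e1 : conv (conv f g) h =
      mul' k E ∘ₗ TensorProduct.map (mul' k E ∘ₗ TensorProduct.map f g) h ∘ₗ
        (TensorProduct.assoc k H H H).symm.toLinearMap ∘ₗ comul3 Coalgebra.comul :=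
    conv_comp_left h (mul' k E ∘ₗ TensorProduct.map f g)
  have e2 : conv f (conv g h) =
      mul' k E ∘ₗ TensorProduct.map f (mul' k E ∘ₗ TensorProduct.map g h) ∘ₗ
        comul3 Coalgebra.comul :=
    conv_comp_right f (mul' k E ∘ₗ TensorProduct.map g h)
  rw [e1, e2]
  have P2 : mul' k E ∘ₗ TensorProduct.map (mul' k E ∘ₗ TensorProduct.map f g) h =
      (mul' k E ∘ₗ TensorProduct.map f (mul' k E ∘ₗ TensorProduct.map g h)) ∘ₗ
        (TensorProduct.assoc k H H H).toLinearMap := by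
    apply TensorProduct.ext_threefold; intro x y z; simp [mul_assoc]
  apply LinearMap.ext; intro w
  have := LinearMap.congr_fun P2
    ((TensorProduct.assoc k H H H).symm ((comul3 (Coalgebra.comul (R := k))) w))
  simpa using this


lemma conv_cunit_left (f : H →ₗ[k] E) : conv cunit f = f := by
  have P : mul' k E ∘ₗ TensorProduct.map (Algebra.linearMap k E ∘ₗ Coalgebra.counit) f =
      f ∘ₗ (TensorProduct.lid k H).toLinearMap ∘ₗ
        LinearMap.rTensor H (Coalgebra.counit (R := k) (A := H)) := by
    apply TensorProduct.ext'; intro x y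
    simp only [LinearMap.comp_apply, TensorProduct.map_tmul, LinearMap.mul'_apply,
      Algebra.linearMap_apply, LinearMap.rTensor_tmul, LinearEquiv.coe_coe,
      TensorProduct.lid_tmul, map_smul]
    rw [Algebra.smul_def]
  apply LinearMap.ext; intro h
  have := LinearMap.congr_fun P (Coalgebra.comul h)
  simp only [conv, cunit, LinearMap.comp_apply] at this ⊢
  rw [this, Coalgebra.rTensor_counit_comul]
  simp

lemma conv_cunit_right (f : H →ₗ[k] E) : conv f cunit = f := by
  have P : mul' k E ∘ₗ TensorProduct.map f (Algebra.linearMap k E ∘ₗ Coalgebra.counit) =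
      f ∘ₗ (TensorProduct.rid k H).toLinearMap ∘ₗ
        LinearMap.lTensor H (Coalgebra.counit (R := k) (A := H)) := by
    apply TensorProduct.ext'; intro x y
    simp only [LinearMap.comp_apply, TensorProduct.map_tmul, LinearMap.mul'_apply,
      Algebra.linearMap_apply, LinearMap.lTensor_tmul, LinearEquiv.coe_coe,
      TensorProduct.rid_tmul, map_smul]
    rw [Algebra.smul_def, ← Algebra.commutes]
  apply LinearMap.ext; intro h
  have := LinearMap.congr_fun P (Coalgebra.comul h)
  simp only [conv, cunit, LinearMap.comp_apply] at this ⊢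
  rw [this, Coalgebra.lTensor_counit_comul]
  simp

lemma mulLeft_comp_conv (x : E) (f g : H →ₗ[k] E) :
    mulLeft k x ∘ₗ conv f g = conv (mulLeft k x ∘ₗ f) g := by
  have P : mulLeft k x ∘ₗ mul' k E ∘ₗ TensorProduct.map f g =
      mul' k E ∘ₗ TensorProduct.map (mulLeft k x ∘ₗ f) g := by
    apply TensorProduct.ext'; intro a b; simp [mul_assoc]
  apply LinearMap.ext; intro h
  have := LinearMap.congr_fun P (Coalgebra.comul h)
  simpa [conv] using this

lemma mulRight_comp_conv (x : E) (f g : H →ₗ[k] E) :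
    mulRight k x ∘ₗ conv f g = conv f (mulRight k x ∘ₗ g) := by
  have P : mulRight k x ∘ₗ mul' k E ∘ₗ TensorProduct.map f g =
      mul' k E ∘ₗ TensorProduct.map f (mulRight k x ∘ₗ g) := by
    apply TensorProduct.ext'; intro a b; simp [mul_assoc]
  apply LinearMap.ext; intro h
  have := LinearMap.congr_fun P (Coalgebra.comul h)
  simpa [conv] using this

lemma mulLeft_cunit (x : E) :
    mulLeft k x ∘ₗ (cunit : H →ₗ[k] E) = mulRight k x ∘ₗ (cunit : H →ₗ[k] E) := by
  apply LinearMap.ext; intro h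
  simp [cunit, mul_smul_comm, smul_mul_assoc, Algebra.commutes]

section Cocomm

variable (hcH : ∀ h : H, TensorProduct.comm k H H (Coalgebra.comul (R := k) h) = Coalgebra.comul h)

include hcH

lemma comm_comul :
    (TensorProduct.comm k H H).toLinearMap ∘ₗ Coalgebra.comul (R := k) (A := H) =
      Coalgebra.comul := LinearMap.ext hcH

/-- Leg-rotation invariance of the iterated comultiplication. -/
lemma rot_comul3 :
    (TensorProduct.comm k (H ⊗[k] H) H).toLinearMap ∘ₗ
        (TensorProduct.assoc k H H H).symm.toLinearMap ∘ₗ comul3 Coalgebra.comul =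
      comul3 (Coalgebra.comul (R := k) (A := H)) := by
  have h1 : (TensorProduct.assoc k H H H).symm.toLinearMap ∘ₗ
      comul3 (Coalgebra.comul (R := k) (A := H)) =
      rTensor H (Coalgebra.comul (R := k) (A := H)) ∘ₗ Coalgebra.comul :=
    Coalgebra.coassoc_symm
  have h2 : (TensorProduct.comm k (H ⊗[k] H) H).toLinearMap ∘ₗ
      rTensor H (Coalgebra.comul (R := k) (A := H)) =
      lTensor H (Coalgebra.comul (R := k) (A := H)) ∘ₗ
        (TensorProduct.comm k H H).toLinearMap := by
    apply TensorProduct.ext'; intro x y; simp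
  rw [h1, ← LinearMap.comp_assoc, h2, LinearMap.comp_assoc, comm_comul hcH]
  rfl

lemma rot_repr {g : H} {ι : Type} {s : Finset ι} {x1 x2 x3 : ι → H}
    (hrep : comul3 (Coalgebra.comul (R := k) (A := H)) g =
      ∑ i ∈ s, x1 i ⊗ₜ[k] (x2 i ⊗ₜ[k] x3 i)) :
    comul3 (Coalgebra.comul (R := k) (A := H)) g =
      ∑ i ∈ s, x3 i ⊗ₜ[k] (x1 i ⊗ₜ[k] x2 i) := by
  have := LinearMap.congr_fun (rot_comul3 (k := k) (H := H) hcH) g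
  rw [← this]
  simp only [LinearMap.comp_apply, hrep, map_sum]
  simp [TensorProduct.assoc_symm_tmul, TensorProduct.comm_tmul]

end Cocomm

lemma conv_comp_distrib (L : H →ₗ[k] E)
    (hL : mul' k E ∘ₗ TensorProduct.map L L = L ∘ₗ mul' k H) (F G : H →ₗ[k] H) :
    conv (L ∘ₗ F) (L ∘ₗ G) = L ∘ₗ conv F G := by
  have h1 : TensorProduct.map (L ∘ₗ F) (L ∘ₗ G) =
      TensorProduct.map L L ∘ₗ TensorProduct.map F G := by
    apply TensorProduct.ext'; intro x y; simp
  apply LinearMap.ext; intro h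
  have h2 := LinearMap.congr_fun hL (TensorProduct.map F G (Coalgebra.comul h))
  simp only [conv, LinearMap.comp_apply, h1] at *
  exact h2

lemma conv_comp_antidistrib (Rr : H →ₗ[k] E)
    (hRr : mul' k E ∘ₗ TensorProduct.map Rr Rr =
      Rr ∘ₗ mul' k H ∘ₗ (TensorProduct.comm k H H).toLinearMap)
    (hcH : ∀ h : H, TensorProduct.comm k H H (Coalgebra.comul (R := k) h) = Coalgebra.comul h)
    (F G : H →ₗ[k] H) :
    conv (Rr ∘ₗ F) (Rr ∘ₗ G) = Rr ∘ₗ conv G F := by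
  have h1 : TensorProduct.map (Rr ∘ₗ F) (Rr ∘ₗ G) =
      TensorProduct.map Rr Rr ∘ₗ TensorProduct.map F G := by
    apply TensorProduct.ext'; intro x y; simp
  have h3 : (TensorProduct.comm k H H).toLinearMap ∘ₗ TensorProduct.map F G =
      TensorProduct.map G F ∘ₗ (TensorProduct.comm k H H).toLinearMap := by
    apply TensorProduct.ext'; intro x y; simp
  apply LinearMap.ext; intro h
  have h2 := LinearMap.congr_fun hRr (TensorProduct.map F G (Coalgebra.comul h))
  simp only [conv, LinearMap.comp_apply, h1] at *
  have h4 := LinearMap.congr_fun h3 (Coalgebra.comul h)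
  simp only [LinearMap.comp_apply] at h4
  rw [h2, h4]
  simp only [LinearEquiv.coe_coe]
  rw [hcH h]

lemma comp_cunit (L : H →ₗ[k] E) (hL1 : L 1 = 1) :
    L ∘ₗ (cunit : H →ₗ[k] H) = (cunit : H →ₗ[k] E) := by
  apply LinearMap.ext; intro h
  simp [cunit, Algebra.algebraMap_eq_smul_one, hL1]

lemma conv_antipode_right (F : H →ₗ[k] H)
    (hF : Coalgebra.comul ∘ₗ F = TensorProduct.map F F ∘ₗ Coalgebra.comul)
    (hFc : Coalgebra.counit ∘ₗ F = Coalgebra.counit (R := k)) :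
    conv F (HopfAlgebra.antipode (R := k) ∘ₗ F) = (cunit : H →ₗ[k] H) := by
  have h1 : TensorProduct.map F (HopfAlgebra.antipode (R := k) ∘ₗ F) =
      lTensor H (HopfAlgebra.antipode (R := k)) ∘ₗ TensorProduct.map F F := by
    apply TensorProduct.ext'; intro x y; simp
  apply LinearMap.ext; intro h
  have h2 := LinearMap.congr_fun hF h
  have h3 := LinearMap.congr_fun hFc h
  simp only [conv, cunit, LinearMap.comp_apply, h1] at *
  rw [← h2, HopfAlgebra.mul_antipode_lTensor_comul_apply, h3]
  rfl

lemma conv_antipode_left (F : H →ₗ[k] H)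
    (hF : Coalgebra.comul ∘ₗ F = TensorProduct.map F F ∘ₗ Coalgebra.comul)
    (hFc : Coalgebra.counit ∘ₗ F = Coalgebra.counit (R := k)) :
    conv (HopfAlgebra.antipode (R := k) ∘ₗ F) F = (cunit : H →ₗ[k] H) := by
  have h1 : TensorProduct.map (HopfAlgebra.antipode (R := k) ∘ₗ F) F =
      rTensor H (HopfAlgebra.antipode (R := k)) ∘ₗ TensorProduct.map F F := by
    apply TensorProduct.ext'; intro x y; simp
  apply LinearMap.ext; intro h
  have h2 := LinearMap.congr_fun hF h
  have h3 := LinearMap.congr_fun hFc h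
  simp only [conv, cunit, LinearMap.comp_apply, h1] at *
  rw [← h2, HopfAlgebra.mul_antipode_rTensor_comul_apply, h3]
  rfl

section T

variable (B : H →ₗ[k] H)

/-- The map `g ↦ g₁ B(g₂)`. -/
def Tmap : H →ₗ[k] H := mul' k H ∘ₗ lTensor H B ∘ₗ Coalgebra.comul

lemma A1 : lTensor H (comul3 (Coalgebra.comul (R := k) (A := H))) ∘ₗ Coalgebra.comul =
    (TensorProduct.assoc k H H (H ⊗[k] H)).toLinearMap ∘ₗ
      TensorProduct.map (Coalgebra.comul (R := k) (A := H)) Coalgebra.comul ∘ₗ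
        Coalgebra.comul := by
  have P : lTensor H (lTensor H (Coalgebra.comul (R := k) (A := H))) ∘ₗ
      (TensorProduct.assoc k H H H).toLinearMap =
      (TensorProduct.assoc k H H (H ⊗[k] H)).toLinearMap ∘ₗ
        lTensor (H ⊗[k] H) (Coalgebra.comul (R := k) (A := H)) := by
    apply TensorProduct.ext_threefold; intro x y z; simp
  have P2 : lTensor (H ⊗[k] H) (Coalgebra.comul (R := k) (A := H)) ∘ₗ
      rTensor H (Coalgebra.comul (R := k) (A := H)) =
      TensorProduct.map Coalgebra.comul Coalgebra.comul := by
    apply TensorProduct.ext'; intro x y; simp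
  apply LinearMap.ext; intro h
  simp only [LinearMap.comp_apply]
  rw [show comul3 (Coalgebra.comul (R := k) (A := H)) =
    lTensor H (Coalgebra.comul) ∘ₗ Coalgebra.comul from rfl, lTensor_comp]
  simp only [LinearMap.comp_apply]
  rw [← Coalgebra.coassoc_apply]
  have q1 := LinearMap.congr_fun P ((rTensor H (Coalgebra.comul (R := k) (A := H)))
    ((Coalgebra.comul (R := k)) h))
  have q2 := LinearMap.congr_fun P2 ((Coalgebra.comul (R := k)) h)
  simp only [LinearMap.comp_apply, LinearEquiv.coe_coe] at q1 q2 ⊢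
  rw [q1, q2]

lemma lc_comul3
    (hcH : ∀ h : H, TensorProduct.comm k H H (Coalgebra.comul (R := k) h) = Coalgebra.comul h) :
    (TensorProduct.leftComm k H H H).toLinearMap ∘ₗ comul3 (Coalgebra.comul (R := k) (A := H)) =
      comul3 Coalgebra.comul := by
  have P : (TensorProduct.leftComm k H H H).toLinearMap ∘ₗ
      (TensorProduct.assoc k H H H).toLinearMap =
      (TensorProduct.assoc k H H H).toLinearMap ∘ₗ
        rTensor H (TensorProduct.comm k H H).toLinearMap := by
    apply TensorProduct.ext_threefold; intro x y z; simp
  apply LinearMap.ext; intro h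
  have c0 : comul3 (Coalgebra.comul (R := k) (A := H)) h =
      (TensorProduct.assoc k H H H) ((rTensor H (Coalgebra.comul (R := k)))
        (Coalgebra.comul h)) := (Coalgebra.coassoc_apply h).symm
  simp only [LinearMap.comp_apply, c0]
  have q1 := LinearMap.congr_fun P ((rTensor H (Coalgebra.comul (R := k) (A := H)))
    ((Coalgebra.comul (R := k)) h))
  simp only [LinearMap.comp_apply, LinearEquiv.coe_coe] at q1 ⊢
  rw [q1]
  have q2 : (rTensor H (TensorProduct.comm k H H).toLinearMap)
      ((rTensor H (Coalgebra.comul (R := k) (A := H))) (Coalgebra.comul h)) =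
      (rTensor H ((TensorProduct.comm k H H).toLinearMap ∘ₗ Coalgebra.comul))
        (Coalgebra.comul h) := by
    rw [rTensor_comp]; rfl
  rw [q2, comm_comul hcH]

lemma mid_comul4
    (hcH : ∀ h : H, TensorProduct.comm k H H (Coalgebra.comul (R := k) h) = Coalgebra.comul h) :
    (TensorProduct.tensorTensorTensorComm k H H H H).toLinearMap ∘ₗ
        TensorProduct.map (Coalgebra.comul (R := k) (A := H)) Coalgebra.comul ∘ₗ
          Coalgebra.comul =
      TensorProduct.map Coalgebra.comul Coalgebra.comul ∘ₗ Coalgebra.comul := by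
  have Fp : (TensorProduct.tensorTensorTensorComm k H H H H).toLinearMap =
      (TensorProduct.assoc k H H (H ⊗[k] H)).symm.toLinearMap ∘ₗ
        lTensor H (TensorProduct.leftComm k H H H).toLinearMap ∘ₗ
          (TensorProduct.assoc k H H (H ⊗[k] H)).toLinearMap := by
    apply TensorProduct.ext_fourfold'; intro a b c d; simp
  apply LinearMap.ext; intro h
  have a1 := LinearMap.congr_fun (A1 (k := k) (H := H)) h
  simp only [LinearMap.comp_apply, LinearEquiv.coe_coe] at a1 ⊢
  have a2 : TensorProduct.map (Coalgebra.comul (R := k) (A := H)) Coalgebra.comul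
      (Coalgebra.comul h) =
      (TensorProduct.assoc k H H (H ⊗[k] H)).symm
        ((lTensor H (comul3 (Coalgebra.comul (R := k) (A := H)))) (Coalgebra.comul h)) := by
    rw [a1]; simp
  rw [a2]
  have fp := LinearMap.congr_fun Fp ((TensorProduct.assoc k H H (H ⊗[k] H)).symm
    ((lTensor H (comul3 (Coalgebra.comul (R := k) (A := H)))) (Coalgebra.comul h)))
  simp only [LinearMap.comp_apply, LinearEquiv.coe_coe, LinearEquiv.apply_symm_apply] at fp
  rw [fp]
  have a3 : (lTensor H (TensorProduct.leftComm k H H H).toLinearMap)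
      ((lTensor H (comul3 (Coalgebra.comul (R := k) (A := H)))) (Coalgebra.comul h)) =
      (lTensor H ((TensorProduct.leftComm k H H H).toLinearMap ∘ₗ
        comul3 (Coalgebra.comul (R := k) (A := H)))) (Coalgebra.comul h) := by
    rw [lTensor_comp]; rfl
  rw [a3, lc_comul3 hcH]

lemma T_counit (hB2 : Coalgebra.counit ∘ₗ B = Coalgebra.counit (R := k)) :
    Coalgebra.counit ∘ₗ Tmap B = Coalgebra.counit (R := k) (A := H) := by
  have P : (Coalgebra.counit (R := k) (A := H)) ∘ₗ mul' k H ∘ₗ lTensor H B =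
      mul' k k ∘ₗ TensorProduct.map (Coalgebra.counit (R := k) (A := H)) Coalgebra.counit := by
    apply TensorProduct.ext'; intro x y
    have := LinearMap.congr_fun hB2 y
    simp only [LinearMap.comp_apply] at this
    simp [this]
  have P2 : TensorProduct.map (Coalgebra.counit (R := k) (A := H)) Coalgebra.counit =
      lTensor k (Coalgebra.counit (R := k) (A := H)) ∘ₗ
        rTensor H (Coalgebra.counit (R := k) (A := H)) := by
    apply TensorProduct.ext'; intro x y; simp
  apply LinearMap.ext; intro h
  have q := LinearMap.congr_fun P (Coalgebra.comul h)
  have q2 := LinearMap.congr_fun P2 (Coalgebra.comul h)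
  simp only [LinearMap.comp_apply, Tmap] at q q2 ⊢
  rw [q, q2, Coalgebra.rTensor_counit_comul]
  simp

lemma T_comul
    (hcH : ∀ h : H, TensorProduct.comm k H H (Coalgebra.comul (R := k) h) = Coalgebra.comul h)
    (hB1 : Coalgebra.comul ∘ₗ B = TensorProduct.map B B ∘ₗ Coalgebra.comul) :
    Coalgebra.comul ∘ₗ Tmap B = TensorProduct.map (Tmap B) (Tmap B) ∘ₗ Coalgebra.comul := by
  have c1 : (Coalgebra.comul (R := k) (A := H)) ∘ₗ mul' k H =
      mul' k (H ⊗[k] H) ∘ₗ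
        TensorProduct.map (Coalgebra.comul (R := k) (A := H)) Coalgebra.comul := by
    apply TensorProduct.ext'; intro x y; simp
  have c2 : TensorProduct.map (Coalgebra.comul (R := k) (A := H)) Coalgebra.comul ∘ₗ
      lTensor H B =
      lTensor (H ⊗[k] H) (TensorProduct.map B B) ∘ₗ
        TensorProduct.map (Coalgebra.comul (R := k) (A := H)) Coalgebra.comul := by
    apply TensorProduct.ext'; intro x y
    have := LinearMap.congr_fun hB1 y
    simp only [LinearMap.comp_apply] at this
    simp [this]
  have c3 : mul' k (H ⊗[k] H) ∘ₗ lTensor (H ⊗[k] H) (TensorProduct.map B B) ∘ₗ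
      (TensorProduct.tensorTensorTensorComm k H H H H).toLinearMap =
      TensorProduct.map (mul' k H ∘ₗ lTensor H B) (mul' k H ∘ₗ lTensor H B) := by
    apply TensorProduct.ext_fourfold'; intro a b c d
    simp [Algebra.TensorProduct.tmul_mul_tmul]
  have c4 : TensorProduct.map (mul' k H ∘ₗ lTensor H B) (mul' k H ∘ₗ lTensor H B) ∘ₗ
      TensorProduct.map (Coalgebra.comul (R := k) (A := H)) Coalgebra.comul =
      TensorProduct.map (Tmap B) (Tmap B) := by
    apply TensorProduct.ext'; intro x y; simp [Tmap]
  apply LinearMap.ext; intro h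
  simp only [LinearMap.comp_apply]
  conv_lhs => rw [show Tmap B h = (mul' k H) ((lTensor H B) (Coalgebra.comul h)) from rfl]
  have e1 := LinearMap.congr_fun c1 ((lTensor H B) (Coalgebra.comul h))
  simp only [LinearMap.comp_apply] at e1
  rw [e1]
  have e2 := LinearMap.congr_fun c2 (Coalgebra.comul h)
  simp only [LinearMap.comp_apply] at e2
  rw [e2]
  have em := LinearMap.congr_fun (mid_comul4 hcH) h
  simp only [LinearMap.comp_apply, LinearEquiv.coe_coe] at em
  rw [← em]
  have e3 := LinearMap.congr_fun c3 ((TensorProduct.map (Coalgebra.comul (R := k) (A := H))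
    Coalgebra.comul) (Coalgebra.comul h))
  simp only [LinearMap.comp_apply, LinearEquiv.coe_coe] at e3
  rw [e3]
  have e4 := LinearMap.congr_fun c4 (Coalgebra.comul h)
  simp only [LinearMap.comp_apply] at e4
  rw [e4]

end T

end RBaux

/-- The auxiliary identities (2.3) in the proof of Theorem 2.2:  if
`R(g₁B(g₂) ▷ b ◁ S_H(B(g₃))) = R(b) ◁ S_H(B(g))`, then
`R(g₁B(g₂) ▷ a) ◁ B(g₃) = R(a ◁ B(g))` and `R(a) ◁ B(g) = R(S_H(g₁B(g₂)) ▷ a ◁ B(g₃))`. -/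
theorem rotaBaxter_smash_aux
    {k A H : Type} [Field k] [Ring A] [Ring H] [HopfAlgebra k A] [HopfAlgebra k H]
    (hcA : ∀ a : A, TensorProduct.comm k A A (Coalgebra.comul (R := k) a) = Coalgebra.comul a)
    (hcH : ∀ h : H, TensorProduct.comm k H H (Coalgebra.comul (R := k) h) = Coalgebra.comul h)
    (D : BimoduleHopfData k A H Coalgebra.comul Coalgebra.counit (HopfAlgebra.antipode k)
      Coalgebra.comul Coalgebra.counit)
    (B : H →ₗ[k] H)
    (hB : IsRotaBaxterOp Coalgebra.comul Coalgebra.counit (LinearMap.mul k H)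
      (HopfAlgebra.antipode (R := k)) B)
    (R : A →ₗ[k] A)
    (hR : ∀ (b : A) (g : H) (ι : Type) (s : Finset ι) (g1 g2 g3 : ι → H),
      comul3 Coalgebra.comul g = ∑ i ∈ s, g1 i ⊗ₜ[k] (g2 i ⊗ₜ[k] g3 i) →
      R (∑ i ∈ s,
          D.ract (D.lact (g1 i * B (g2 i)) b) (HopfAlgebra.antipode (R := k) (B (g3 i)))) =
        D.ract (R b) (HopfAlgebra.antipode (R := k) (B g))) :
    (∀ (a : A) (g : H) (ι : Type) (s : Finset ι) (g1 g2 g3 : ι → H),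
      comul3 Coalgebra.comul g = ∑ i ∈ s, g1 i ⊗ₜ[k] (g2 i ⊗ₜ[k] g3 i) →
      ∑ i ∈ s, D.ract (R (D.lact (g1 i * B (g2 i)) a)) (B (g3 i)) = R (D.ract a (B g))) ∧
    (∀ (a : A) (g : H) (ι : Type) (s : Finset ι) (g1 g2 g3 : ι → H),
      comul3 Coalgebra.comul g = ∑ i ∈ s, g1 i ⊗ₜ[k] (g2 i ⊗ₜ[k] g3 i) →
      D.ract (R a) (B g) =
        R (∑ i ∈ s,
            D.ract (D.lact (HopfAlgebra.antipode (R := k) (g1 i * B (g2 i))) a) (B (g3 i)))) := by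
  classical
  obtain ⟨hB1, hB2, -⟩ := hB
  set SH := HopfAlgebra.antipode (R := k) (A := H) with hSH
  have hL : LinearMap.mul' k (Module.End k A) ∘ₗ TensorProduct.map D.lact D.lact =
      D.lact ∘ₗ LinearMap.mul' k H := by
    apply TensorProduct.ext'; intro x y
    apply LinearMap.ext; intro a
    simp [D.mul_lact, Module.End.mul_apply]
  have hRr : LinearMap.mul' k (Module.End k A) ∘ₗ TensorProduct.map D.ract.flip D.ract.flip =
      D.ract.flip ∘ₗ LinearMap.mul' k H ∘ₗ (TensorProduct.comm k H H).toLinearMap := by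
    apply TensorProduct.ext'; intro x y
    apply LinearMap.ext; intro a
    simp [D.ract_mul, Module.End.mul_apply]
  have hL1 : D.lact (1 : H) = (1 : Module.End k A) := by
    apply LinearMap.ext; intro a; simp [D.one_lact, Module.End.one_apply]
  have hRr1 : D.ract.flip (1 : H) = (1 : Module.End k A) := by
    apply LinearMap.ext; intro a; simp [D.ract_one, Module.End.one_apply]
  -- basic convolution collapses
  have cQQ' : RBaux.conv (D.ract.flip ∘ₗ B) (D.ract.flip ∘ₗ (SH ∘ₗ B)) = RBaux.cunit := by
    rw [RBaux.conv_comp_antidistrib D.ract.flip hRr hcH B (SH ∘ₗ B),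
      RBaux.conv_antipode_left B hB1 hB2, RBaux.comp_cunit D.ract.flip hRr1]
  have cQ'Q : RBaux.conv (D.ract.flip ∘ₗ (SH ∘ₗ B)) (D.ract.flip ∘ₗ B) = RBaux.cunit := by
    rw [RBaux.conv_comp_antidistrib D.ract.flip hRr hcH (SH ∘ₗ B) B,
      RBaux.conv_antipode_right B hB1 hB2, RBaux.comp_cunit D.ract.flip hRr1]
  have cPP' : RBaux.conv (D.lact ∘ₗ RBaux.Tmap B) (D.lact ∘ₗ (SH ∘ₗ RBaux.Tmap B)) =
      RBaux.cunit := by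
    rw [RBaux.conv_comp_distrib D.lact hL (RBaux.Tmap B) (SH ∘ₗ RBaux.Tmap B),
      RBaux.conv_antipode_right (RBaux.Tmap B) (RBaux.T_comul B hcH hB1) (RBaux.T_counit B hB2),
      RBaux.comp_cunit D.lact hL1]
  -- the hypothesis in convolution form
  have hR'' : LinearMap.mulLeft k (R : Module.End k A) ∘ₗ
      RBaux.conv (D.lact ∘ₗ RBaux.Tmap B) (D.ract.flip ∘ₗ (SH ∘ₗ B)) =
      LinearMap.mulRight k (R : Module.End k A) ∘ₗ (D.ract.flip ∘ₗ (SH ∘ₗ B)) := by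
    apply LinearMap.ext; intro g
    apply LinearMap.ext; intro a
    obtain ⟨ι, s, x1, x2, x3, hrep⟩ :=
      RBaux.exists_repr3 (comul3 (Coalgebra.comul (R := k) (A := H)) g)
    have e1 : RBaux.conv (D.lact ∘ₗ RBaux.Tmap B) (D.ract.flip ∘ₗ (SH ∘ₗ B)) g =
        ∑ i ∈ s, (D.lact ∘ₗ LinearMap.mul' k H ∘ₗ LinearMap.lTensor H B) (x1 i ⊗ₜ[k] x2 i) *
          (D.ract.flip ∘ₗ (SH ∘ₗ B)) (x3 i) :=
      RBaux.conv_comp_left_repr (D.ract.flip ∘ₗ (SH ∘ₗ B))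
        (D.lact ∘ₗ LinearMap.mul' k H ∘ₗ LinearMap.lTensor H B) hrep
    simp only [LinearMap.comp_apply, LinearMap.mulLeft_apply, LinearMap.mulRight_apply,
      Module.End.mul_apply, e1, LinearMap.sum_apply, LinearMap.lTensor_tmul,
      LinearMap.mul'_apply, LinearMap.flip_apply]
    rw [show ∑ i ∈ s, D.lact (x1 i * B (x2 i)) (D.ract a (SH (B (x3 i)))) =
        ∑ i ∈ s, D.ract (D.lact (x1 i * B (x2 i)) a) (SH (B (x3 i))) from
      Finset.sum_congr rfl fun i _ => D.lact_ract _ _ _]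
    exact hR a g ι s x1 x2 x3 hrep
  -- identity (i) in convolution form
  have e0 : RBaux.conv (RBaux.conv (D.lact ∘ₗ RBaux.Tmap B) (D.ract.flip ∘ₗ (SH ∘ₗ B)))
      (D.ract.flip ∘ₗ B) = D.lact ∘ₗ RBaux.Tmap B := by
    rw [RBaux.conv_assoc, cQ'Q, RBaux.conv_cunit_right]
  have I1 : RBaux.conv (D.ract.flip ∘ₗ B)
      (LinearMap.mulLeft k (R : Module.End k A) ∘ₗ (D.lact ∘ₗ RBaux.Tmap B)) =
      LinearMap.mulLeft k (R : Module.End k A) ∘ₗ (D.ract.flip ∘ₗ B) := by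
    conv_lhs => rw [← e0]
    rw [RBaux.mulLeft_comp_conv, hR'', ← RBaux.conv_assoc, ← RBaux.mulRight_comp_conv,
      cQQ', ← RBaux.mulLeft_cunit, ← RBaux.mulLeft_comp_conv, RBaux.conv_cunit_left]
  -- identity (ii) in convolution form
  have I2 : LinearMap.mulLeft k (R : Module.End k A) ∘ₗ
      RBaux.conv (D.ract.flip ∘ₗ B) (D.lact ∘ₗ (SH ∘ₗ RBaux.Tmap B)) =
      LinearMap.mulRight k (R : Module.End k A) ∘ₗ (D.ract.flip ∘ₗ B) := by
    rw [RBaux.mulLeft_comp_conv, ← I1, RBaux.conv_assoc, ← RBaux.mulLeft_comp_conv,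
      cPP', RBaux.mulLeft_cunit, ← RBaux.mulRight_comp_conv, RBaux.conv_cunit_right]
  constructor
  · intro a g ι s g1 g2 g3 hrep
    have hrot := RBaux.rot_repr hcH hrep
    have e1 : RBaux.conv (D.ract.flip ∘ₗ B)
        (LinearMap.mulLeft k (R : Module.End k A) ∘ₗ (D.lact ∘ₗ RBaux.Tmap B)) g =
        ∑ i ∈ s, (D.ract.flip ∘ₗ B) (g3 i) *
          (LinearMap.mulLeft k (R : Module.End k A) ∘ₗ D.lact ∘ₗ LinearMap.mul' k H ∘ₗ
            LinearMap.lTensor H B) (g1 i ⊗ₜ[k] g2 i) :=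
      RBaux.conv_comp_right_repr (D.ract.flip ∘ₗ B)
        (LinearMap.mulLeft k (R : Module.End k A) ∘ₗ D.lact ∘ₗ LinearMap.mul' k H ∘ₗ
          LinearMap.lTensor H B) hrot
    have := LinearMap.congr_fun (LinearMap.congr_fun I1 g) a
    rw [e1] at this
    simpa only [LinearMap.comp_apply, LinearMap.sum_apply, Module.End.mul_apply,
      LinearMap.mulLeft_apply, LinearMap.lTensor_tmul, LinearMap.mul'_apply,
      LinearMap.flip_apply] using this
  · intro a g ι s g1 g2 g3 hrep
    have hrot := RBaux.rot_repr hcH hrep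
    have e1 : RBaux.conv (D.ract.flip ∘ₗ B) (D.lact ∘ₗ (SH ∘ₗ RBaux.Tmap B)) g =
        ∑ i ∈ s, (D.ract.flip ∘ₗ B) (g3 i) *
          (D.lact ∘ₗ SH ∘ₗ LinearMap.mul' k H ∘ₗ LinearMap.lTensor H B) (g1 i ⊗ₜ[k] g2 i) :=
      RBaux.conv_comp_right_repr (D.ract.flip ∘ₗ B)
        (D.lact ∘ₗ SH ∘ₗ LinearMap.mul' k H ∘ₗ LinearMap.lTensor H B) hrot
    have := LinearMap.congr_fun (LinearMap.congr_fun I2 g) a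
    simp only [LinearMap.comp_apply, LinearMap.mulLeft_apply, LinearMap.mulRight_apply,
      Module.End.mul_apply] at this
    rw [e1] at this
    simpa only [LinearMap.comp_apply, LinearMap.sum_apply, Module.End.mul_apply,
      LinearMap.mulLeft_apply, LinearMap.mulRight_apply, LinearMap.lTensor_tmul,
      LinearMap.mul'_apply, LinearMap.flip_apply, map_sum] using this.symm

end
end

section
/- Let A and H be cocommutative Hopf algebras over a field k such that A is an H-bimodule Hopf algebra, let B be a Rota-Baxter operator on H, let R : A → A be a linear map, and define B̄ : A ⋈ H → A ⋈ H by B̄(a ⋈ h) = B(h₁) ▷ R(a) ◁ B(h₂) ⋈ B(h₃). If B̄ is a coalgebra map, then R is a coalgebra map, i.e. Δ(R(a)) = R(a₁) ⊗ R(a₂) and ε(R(a)) = ε(a) for all a ∈ A. -/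
open TensorProduct

noncomputable section

variable {k : Type} [Field k]

variable {A H : Type} [Ring A] [Ring H] [Algebra k A] [Algebra k H]
  {ΔA : A →ₗ[k] A ⊗[k] A} {εA : A →ₗ[k] k} {SA : A →ₗ[k] A}
  {ΔH : H →ₗ[k] H ⊗[k] H} {εH : H →ₗ[k] k}

/-- If `B̄(a ⋈ h) = B(h₁) ▷ R(a) ◁ B(h₂) ⋈ B(h₃)` is a coalgebra map on the L-R smash
product, then `R` is a coalgebra map. -/
theorem coalgebraMap_of_Bbar_coalgebraMap
    {k A H : Type} [Field k] [Ring A] [Ring H] [HopfAlgebra k A] [HopfAlgebra k H]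
    (hcA : ∀ a : A, TensorProduct.comm k A A (Coalgebra.comul (R := k) a) = Coalgebra.comul a)
    (hcH : ∀ h : H, TensorProduct.comm k H H (Coalgebra.comul (R := k) h) = Coalgebra.comul h)
    (D : BimoduleHopfData k A H Coalgebra.comul Coalgebra.counit (HopfAlgebra.antipode (R := k))
      Coalgebra.comul Coalgebra.counit)
    (R : A →ₗ[k] A) (B : H →ₗ[k] H)
    (hB : IsRotaBaxterOp Coalgebra.comul Coalgebra.counit (LinearMap.mul k H)
      (HopfAlgebra.antipode (R := k)) B)
    (Bb : A ⊗[k] H →ₗ[k] A ⊗[k] H) (hBb : IsBbar D R B Bb)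
    (hcomul : smashComul (Coalgebra.comul (R := k) (A := A))
        (Coalgebra.comul (R := k) (A := H)) ∘ₗ Bb =
      TensorProduct.map Bb Bb ∘ₗ smashComul Coalgebra.comul Coalgebra.comul)
    (hcounit : smashCounit (Coalgebra.counit (R := k) (A := A))
        (Coalgebra.counit (R := k) (A := H)) ∘ₗ Bb =
      smashCounit Coalgebra.counit Coalgebra.counit) :
    Coalgebra.comul ∘ₗ R = TensorProduct.map R R ∘ₗ Coalgebra.comul ∧
    Coalgebra.counit ∘ₗ R = Coalgebra.counit (R := k) := by
  classical
  set g : H := B 1 with hgdef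
  have hΔ1 : Coalgebra.comul (R := k) (1 : H) = (1 : H) ⊗ₜ[k] (1 : H) := by
    simp [Algebra.TensorProduct.one_def]
  have hΔg : Coalgebra.comul (R := k) g = g ⊗ₜ[k] g := by
    have h := LinearMap.congr_fun hB.1 (1 : H)
    simpa [hΔ1, ← hgdef] using h
  have hεg : Coalgebra.counit (R := k) g = 1 := by
    have h := LinearMap.congr_fun hB.2.1 (1 : H)
    simpa [← hgdef] using h
  set Sg : H := HopfAlgebra.antipode (R := k) g with hSgdef
  have hSgg : Sg * g = 1 := by
    have h := HopfAlgebra.mul_antipode_rTensor_comul_apply (R := k) g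
    rw [hΔg] at h
    simpa [hεg, ← hSgdef] using h
  have hgSg : g * Sg = 1 := by
    have h := HopfAlgebra.mul_antipode_lTensor_comul_apply (R := k) g
    rw [hΔg] at h
    simpa [hεg, ← hSgdef] using h
  have hc31 : comul3 (Coalgebra.comul (R := k) (A := H)) (1 : H) =
      ∑ _i ∈ ({0} : Finset ℕ), (1 : H) ⊗ₜ[k] ((1 : H) ⊗ₜ[k] (1 : H)) := by
    simp [comul3, hΔ1]
  have hBb1 : ∀ a : A, Bb (a ⊗ₜ[k] (1 : H)) = D.ract (D.lact g (R a)) g ⊗ₜ[k] g := by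
    intro a
    have h := hBb a 1 ℕ {0} (fun _ => 1) (fun _ => 1) (fun _ => 1) hc31
    simpa [← hgdef] using h
  have hcnt : ∀ a : A, Coalgebra.counit (R := k) (R a) = Coalgebra.counit a := by
    intro a
    have h := LinearMap.congr_fun hcounit (a ⊗ₜ[k] (1 : H))
    rw [LinearMap.comp_apply, hBb1] at h
    simpa [smashCounit, D.counit_ract, D.counit_lact, hεg] using h
  -- the "undoing" map φ
  set φ : A ⊗[k] H →ₗ[k] A :=
    (D.lact Sg ∘ₗ D.ract.flip Sg) ∘ₗ (TensorProduct.rid k A).toLinearMap ∘ₗ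
      LinearMap.lTensor A (Coalgebra.counit (R := k)) with hφdef
  have hφ_apply : ∀ r : A, φ (D.ract (D.lact g r) g ⊗ₜ[k] g) = r := by
    intro r
    rw [hφdef]
    simp only [LinearMap.comp_apply, LinearMap.lTensor_tmul, LinearEquiv.coe_coe,
      TensorProduct.rid_tmul, hεg, one_smul, LinearMap.flip_apply]
    rw [← D.ract_mul, hgSg, D.ract_one, ← D.mul_lact, hSgg, D.one_lact]
  have hΔg' : Coalgebra.comul (R := k) g = ∑ _i ∈ ({0} : Finset ℕ), g ⊗ₜ[k] g := by
    simpa using hΔg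
  have hcml : ∀ a : A, Coalgebra.comul (R := k) (R a) =
      TensorProduct.map R R (Coalgebra.comul a) := by
    intro a
    obtain ⟨s, hs⟩ := TensorProduct.exists_finset (Coalgebra.comul (R := k) (R a))
    obtain ⟨t, ht⟩ := TensorProduct.exists_finset (Coalgebra.comul (R := k) a)
    have h1 : Coalgebra.comul (R := k) (D.lact g (R a)) =
        ∑ p ∈ s, D.lact g p.1 ⊗ₜ[k] D.lact g p.2 := by
      have h := D.comul_lact g (R a) ℕ (A × A) {0} s (fun _ => g) (fun _ => g)
        (fun p => p.1) (fun p => p.2) hΔg' hs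
      simpa using h
    have h2 : Coalgebra.comul (R := k) (D.ract (D.lact g (R a)) g) =
        ∑ p ∈ s, D.ract (D.lact g p.1) g ⊗ₜ[k] D.ract (D.lact g p.2) g := by
      have h := D.comul_ract (D.lact g (R a)) g (A × A) ℕ s {0}
        (fun p => D.lact g p.1) (fun p => D.lact g p.2) (fun _ => g) (fun _ => g) h1 hΔg'
      simpa using h
    have hLHS : smashComul (Coalgebra.comul (R := k) (A := A))
        (Coalgebra.comul (R := k) (A := H)) (D.ract (D.lact g (R a)) g ⊗ₜ[k] g) =
        ∑ p ∈ s, (D.ract (D.lact g p.1) g ⊗ₜ[k] g) ⊗ₜ[k]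
          (D.ract (D.lact g p.2) g ⊗ₜ[k] g) := by
      set_option synthInstance.maxHeartbeats 1000000 in
      simp [smashComul, h2, hΔg, TensorProduct.sum_tmul, map_sum,
        TensorProduct.tensorTensorTensorComm_tmul]
    have hRHS : TensorProduct.map Bb Bb (smashComul (Coalgebra.comul (R := k) (A := A))
        (Coalgebra.comul (R := k) (A := H)) (a ⊗ₜ[k] (1 : H))) =
        ∑ q ∈ t, (D.ract (D.lact g (R q.1)) g ⊗ₜ[k] g) ⊗ₜ[k]
          (D.ract (D.lact g (R q.2)) g ⊗ₜ[k] g) := by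
      set_option synthInstance.maxHeartbeats 1000000 in
      simp [smashComul, ht, hΔ1, TensorProduct.sum_tmul, map_sum,
        TensorProduct.tensorTensorTensorComm_tmul, hBb1]
    have hmain := LinearMap.congr_fun hcomul (a ⊗ₜ[k] (1 : H))
    rw [LinearMap.comp_apply, LinearMap.comp_apply, hBb1, hLHS, hRHS] at hmain
    have h3 := congrArg (TensorProduct.map φ φ) hmain
    simp only [map_sum, TensorProduct.map_tmul, hφ_apply] at h3
    rw [hs, ht, map_sum]
    simpa using h3
  constructor
  · ext a
    simpa using hcml a
  · ext a
    simpa using hcnt a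


end
end

section
/- Let H be a commutative Hopf algebra over a field k with antipode S and counit ε, and let B : H → H be a Rota-Baxter co-operator on H. Then ε ∘ B = ε. -/
open TensorProduct

noncomputable section

/-- `B` is a Rota–Baxter co-operator w.r.t. a comultiplication `Δ` and antipode `S` on a
commutative algebra `V`:  `B` is an algebra map satisfying
`B(x₁) ⊗ B(x₂) = B(x)₁ · B(B(x)₂ · S(B(x)₄)) ⊗ B(x)₃` for all `x`. -/
def IsRotaBaxterCoOp {k V : Type} [Field k] [CommRing V] [Module k V]
    (Δ : V →ₗ[k] V ⊗[k] V) (S : V →ₗ[k] V) (B : V →ₗ[k] V) : Prop :=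
  B 1 = 1 ∧ (∀ x y : V, B (x * y) = B x * B y) ∧
  ∀ (x : V) (ι κ κ1 κ2 : Type) (s : Finset ι) (y z : ι → V)
    (t : Finset κ) (u v : κ → V)
    (t1 : κ → Finset κ1) (u1 u2 : κ → κ1 → V)
    (t2 : κ → Finset κ2) (v1 v2 : κ → κ2 → V),
    Δ x = ∑ i ∈ s, y i ⊗ₜ[k] z i →
    Δ (B x) = ∑ j ∈ t, u j ⊗ₜ[k] v j →
    (∀ j, Δ (u j) = ∑ l ∈ t1 j, u1 j l ⊗ₜ[k] u2 j l) →
    (∀ j, Δ (v j) = ∑ m ∈ t2 j, v1 j m ⊗ₜ[k] v2 j m) →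
    ∑ i ∈ s, B (y i) ⊗ₜ[k] B (z i) =
      ∑ j ∈ t, ∑ l ∈ t1 j, ∑ m ∈ t2 j,
        (u1 j l * B (u2 j l * S (v2 j m))) ⊗ₜ[k] v1 j m

set_option synthInstance.maxHeartbeats 1000000 in
set_option maxHeartbeats 1000000 in
/-- **Proposition 3.2.**  If `B` is a Rota–Baxter co-operator on a commutative Hopf
algebra `H`, then `ε ∘ B = ε`. -/
theorem counit_comp_rotaBaxterCo
    {k H : Type} [Field k] [CommRing H] [HopfAlgebra k H]
    (B : H →ₗ[k] H)
    (hB : IsRotaBaxterCoOp Coalgebra.comul (HopfAlgebra.antipode (R := k)) B) :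
    Coalgebra.counit ∘ₗ B = Coalgebra.counit (R := k) := by
  classical
  obtain ⟨hB1, hBm, hmain⟩ := hB
  have rep : ∀ a : H, ∃ s : Finset (H × H),
      Coalgebra.comul (R := k) a = ∑ p ∈ s, p.1 ⊗ₜ[k] p.2 := fun a =>
    TensorProduct.exists_finset _
  choose T hT using rep
  set S : H →ₗ[k] H := HopfAlgebra.antipode (R := k) with hSdef
  set ε : H →ₗ[k] k := Coalgebra.counit with hεdef
  -- first-leg counit identity composed with a linear map
  have h1 : ∀ (g : H →ₗ[k] k) (a : H), ∑ p ∈ T a, ε p.1 * g p.2 = g a := by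
    intro g a
    have h := Coalgebra.rTensor_counit_comul (R := k) a
    rw [hT a, map_sum] at h
    have h' := congrArg (TensorProduct.lid k H) h
    simp only [map_sum, LinearMap.rTensor_tmul, TensorProduct.lid_tmul] at h'
    have h'' := congrArg g h'
    simpa [map_sum, map_smul, smul_eq_mul] using h''
  -- second-leg counit identity composed with a linear map
  have h2 : ∀ (g : H →ₗ[k] k) (a : H), ∑ p ∈ T a, g p.1 * ε p.2 = g a := by
    intro g a
    have h := Coalgebra.lTensor_counit_comul (R := k) a
    rw [hT a, map_sum] at h
    have h' := congrArg (TensorProduct.rid k H) h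
    simp only [map_sum, LinearMap.lTensor_tmul, TensorProduct.rid_tmul] at h'
    have h'' := congrArg g h'
    simpa [map_sum, map_smul, smul_eq_mul, mul_comm] using h''
  -- antipode identity
  have h3 : ∀ a : H, ∑ p ∈ T a, p.1 * S p.2 = algebraMap k H (ε a) := by
    intro a
    have h := HopfAlgebra.mul_antipode_lTensor_comul_apply (R := k) a
    rw [hT a, map_sum, map_sum] at h
    simpa [LinearMap.lTensor_tmul, LinearMap.mul'_apply] using h
  -- multiplicativity of ε ∘ B
  have hfm : ∀ a b : H, ε (B (a * b)) = ε (B a) * ε (B b) := by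
    intro a b
    rw [hBm, hεdef, Bialgebra.counit_mul]
  -- ε ∘ B is convolution-inverted by ε ∘ B ∘ S
  have hinv : ∀ a : H, ∑ p ∈ T a, ε (B p.1) * ε (B (S p.2)) = ε a := by
    intro a
    have h : ∑ p ∈ T a, ε (B (p.1 * S p.2)) = ε a := by
      rw [← map_sum, ← map_sum, h3 a]
      simp [Algebra.algebraMap_eq_smul_one, hB1, hεdef]
    simpa [hfm] using h
  -- the key consequence of the Rota–Baxter co-operator identity: f ⋆ f = f
  have hstar : ∀ a : H, ∑ p ∈ T a, ε (B p.1) * ε (B p.2) = ε (B a) := by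
    intro a
    have E := hmain a (H × H) (H × H) (H × H) (H × H) (T a) Prod.fst Prod.snd
      (T (B a)) Prod.fst Prod.snd (fun q => T q.1) (fun _ l => l.1) (fun _ l => l.2)
      (fun q => T q.2) (fun _ m => m.1) (fun _ m => m.2)
      (hT a) (hT (B a)) (fun q => hT q.1) (fun q => hT q.2)
    have E2 := congrArg (LinearMap.mul' k k ∘ₗ TensorProduct.map ε ε) E
    simp only [LinearMap.coe_comp, Function.comp_apply, map_sum, TensorProduct.map_tmul,
      LinearMap.mul'_apply] at E2
    rw [E2]
    have hsummand : ∀ q ∈ T (B a),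
        (∑ l ∈ T q.1, ∑ m ∈ T q.2, ε (l.1 * B (l.2 * S m.2)) * ε m.1)
        = ε (B q.1) * ε (B (S q.2)) := by
      intro q _
      have step : ∀ l ∈ T q.1, ∀ m ∈ T q.2,
          ε (l.1 * B (l.2 * S m.2)) * ε m.1
          = (ε l.1 * ε (B l.2)) * (ε m.1 * ε (B (S m.2))) := by
        intro l _ m _
        rw [hεdef]
        rw [Bialgebra.counit_mul]
        rw [← hεdef, hfm]
        ring
      calc (∑ l ∈ T q.1, ∑ m ∈ T q.2, ε (l.1 * B (l.2 * S m.2)) * ε m.1)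
          = ∑ l ∈ T q.1, ∑ m ∈ T q.2,
              (ε l.1 * ε (B l.2)) * (ε m.1 * ε (B (S m.2))) := by
            refine Finset.sum_congr rfl fun l hl => Finset.sum_congr rfl fun m hm => ?_
            exact step l hl m hm
        _ = (∑ l ∈ T q.1, ε l.1 * ε (B l.2)) * (∑ m ∈ T q.2, ε m.1 * ε (B (S m.2))) := by
            rw [Finset.sum_mul_sum]
        _ = ε (B q.1) * ε (B (S q.2)) := by
            have e1 := h1 (ε ∘ₗ B) q.1
            have e2 := h1 (ε ∘ₗ B ∘ₗ S) q.2
            simp only [LinearMap.coe_comp, Function.comp_apply] at e1 e2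
            rw [e1, e2]
    rw [Finset.sum_congr rfl hsummand, hinv (B a)]
  -- final step via coassociativity
  ext x
  have E3 : (∑ p ∈ T x, ∑ l ∈ T p.1, l.1 ⊗ₜ[k] (l.2 ⊗ₜ[k] p.2))
      = ∑ p ∈ T x, ∑ m ∈ T p.2, p.1 ⊗ₜ[k] (m.1 ⊗ₜ[k] m.2) := by
    have h := Coalgebra.coassoc_apply (R := k) x
    simp only [hT, map_sum, LinearMap.rTensor_tmul, LinearMap.lTensor_tmul,
      TensorProduct.sum_tmul, TensorProduct.tmul_sum, map_sum,
      TensorProduct.assoc_tmul] at h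
    exact h
  have E4 := congrArg (LinearMap.mul' k k ∘ₗ TensorProduct.map (ε ∘ₗ B)
      (LinearMap.mul' k k ∘ₗ TensorProduct.map (ε ∘ₗ B) (ε ∘ₗ B ∘ₗ S))) E3
  simp only [LinearMap.coe_comp, Function.comp_apply, map_sum, TensorProduct.map_tmul,
    LinearMap.mul'_apply] at E4
  -- E4 : ∑ p ∑ l, ε(B l.1) * (ε(B l.2) * ε(B (S p.2)))
  --    = ∑ p ∑ m, ε(B p.1) * (ε(B m.1) * ε(B (S m.2)))
  have lhs_eq : (∑ p ∈ T x, ∑ l ∈ T p.1, ε (B l.1) * (ε (B l.2) * ε (B (S p.2)))) = ε x := by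
    calc (∑ p ∈ T x, ∑ l ∈ T p.1, ε (B l.1) * (ε (B l.2) * ε (B (S p.2))))
        = ∑ p ∈ T x, (∑ l ∈ T p.1, ε (B l.1) * ε (B l.2)) * ε (B (S p.2)) := by
          refine Finset.sum_congr rfl fun p _ => ?_
          rw [Finset.sum_mul]
          exact Finset.sum_congr rfl fun l _ => by ring
      _ = ∑ p ∈ T x, ε (B p.1) * ε (B (S p.2)) := by
          refine Finset.sum_congr rfl fun p _ => ?_
          rw [hstar p.1]
      _ = ε x := hinv x
  have rhs_eq : (∑ p ∈ T x, ∑ m ∈ T p.2, ε (B p.1) * (ε (B m.1) * ε (B (S m.2)))) = ε (B x) := by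
    calc (∑ p ∈ T x, ∑ m ∈ T p.2, ε (B p.1) * (ε (B m.1) * ε (B (S m.2))))
        = ∑ p ∈ T x, ε (B p.1) * ∑ m ∈ T p.2, ε (B m.1) * ε (B (S m.2)) := by
          refine Finset.sum_congr rfl fun p _ => ?_
          rw [Finset.mul_sum]
      _ = ∑ p ∈ T x, ε (B p.1) * ε p.2 := by
          refine Finset.sum_congr rfl fun p _ => ?_
          rw [hinv p.2]
      _ = ε (B x) := by
          have e := h2 (ε ∘ₗ B) x
          simp only [LinearMap.coe_comp, Function.comp_apply] at e
          exact e
  have : ε (B x) = ε x := by rw [← lhs_eq, ← rhs_eq]; exact E4.symm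
  simpa using this

end
end
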